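/- Let E be a finite-dimensional real inner product space, W : E →ₗ[ℝ] E symmetric positive definite (hence bijective with inverse W⁻¹), K a subspace of E, and P̃ : E →ₗ[ℝ] E the W-orthogonal projection onto K. Let A : E →ₗ[ℝ] E be symmetric (⟨A x, y⟩ = ⟨x, A y⟩) and idempotent (A ∘ A = A). Fix e ∈ E, set G := A e and D := P̃ (W⁻¹ G), and assume A D ≠ 0. Then with α* := ⟨W D, D⟩ / ‖A D‖², for every real α: (1/2) * ⟨e - α* • D, A (e - α* • D)⟩ ≤ (1/2) * ⟨e - α • D, A (e - α • D)⟩. -/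

import Mathlib

open scoped RealInnerProductSpace

/-- The adaptive step-size formula (3.7): `α* = ⟨W D, D⟩ / ‖A D‖²` minimizes
`α ↦ ½⟨e - α D, A (e - α D)⟩`, where `D = 𝒫̃(W⁻¹ (A e))` is the preconditioned Riemannian
gradient, `𝒫̃` is the `W`-orthogonal projection onto `K`, and `A` is symmetric idempotent. -/
theorem adaptive_stepsize_optimal
    {E : Type*} [NormedAddCommGroup E] [InnerProductSpace ℝ E] [FiniteDimensional ℝ E]
    (W Winv : E →ₗ[ℝ] E)
    (hWsym : ∀ x y : E, ⟪W x, y⟫ = ⟪x, W y⟫)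
    (hWpd : ∀ x : E, x ≠ 0 → 0 < ⟪W x, x⟫)
    (hWinv1 : ∀ x : E, W (Winv x) = x) (hWinv2 : ∀ x : E, Winv (W x) = x)
    (K : Submodule ℝ E) (P : E →ₗ[ℝ] E)
    (hP1 : ∀ x : E, P x ∈ K) (hP2 : ∀ k ∈ K, P k = k)
    (hP3 : ∀ x : E, ∀ k ∈ K, ⟪W (x - P x), k⟫ = 0)
    (A : E →ₗ[ℝ] E)
    (hAsym : ∀ x y : E, ⟪A x, y⟫ = ⟪x, A y⟫)
    (hAidem : ∀ x : E, A (A x) = A x)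
    (e : E) (G D : E) (hG : G = A e) (hD : D = P (Winv G)) (hAD : A D ≠ 0)
    (αstar : ℝ) (hαstar : αstar = ⟪W D, D⟫ / ‖A D‖ ^ 2) :
    ∀ α : ℝ,
      (1 / 2) * ⟪e - αstar • D, A (e - αstar • D)⟫ ≤
        (1 / 2) * ⟪e - α • D, A (e - α • D)⟫ := by
  have hDK : D ∈ K := hD ▸ hP1 (Winv G)
  have h2 : ⟪D, A D⟫ = ‖A D‖ ^ 2 := by
    have : ⟪A D, A D⟫ = ⟪D, A D⟫ := by rw [hAsym, hAidem]
    rw [← this, real_inner_self_eq_norm_sq]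
  have hpos : (0:ℝ) < ‖A D‖ ^ 2 := by
    have := norm_pos_iff.mpr hAD
    positivity
  have h1 : ⟪e, A D⟫ = ⟪W D, D⟫ := by
    have h3 := hP3 (Winv G) D hDK
    rw [map_sub, inner_sub_left, hWinv1, ← hD, sub_eq_zero] at h3
    calc ⟪e, A D⟫ = ⟪A e, D⟫ := by rw [hAsym, real_inner_comm]
    _ = ⟪G, D⟫ := by rw [hG]
    _ = ⟪W D, D⟫ := h3
  have hexp : ∀ α : ℝ, ⟪e - α • D, A (e - α • D)⟫
      = ⟪e, A e⟫ - 2 * α * ⟪W D, D⟫ + α ^ 2 * ‖A D‖ ^ 2 := by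
    intro α
    have hDe : ⟪D, A e⟫ = ⟪W D, D⟫ := by
      rw [← hAsym, real_inner_comm, h1]
    simp only [map_sub, map_smul, inner_sub_left, inner_sub_right,
      inner_smul_left, inner_smul_right, RCLike.ofReal_real_eq_id, id_eq,
      conj_trivial]
    rw [h1, hDe, h2]; ring
  have hb : ⟪W D, D⟫ = αstar * ‖A D‖ ^ 2 := by
    rw [hαstar, div_mul_cancel₀ _ hpos.ne']
  intro α
  rw [hexp, hexp, hb]
  nlinarith [sq_nonneg (α - αstar), hpos, sq_nonneg α, sq_nonneg αstar]
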